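/- Gibbs variational principle: let ρ be a probability density and f a measurable function with ρ e^{-f} integrable. Then over all probability densities π, the functional J[π] = E_π[f] + D[π ∥ ρ] satisfies J[π] ≥ −log ∫ ρ e^{-f}, with equality attained uniquely (a.e.) by π*(x) = ρ(x) e^{-f(x)} / ∫ ρ e^{-f}. -/

import Mathlib

open MeasureTheory Real

/-- Core KL lemma: for densities `p, q` with `p ≪ q`, `∫ p log(p/q) ≥ 0`,
with equality only if `p = q` a.e. -/
lemma kl_core {X : Type*} [MeasurableSpace X] (μ : Measure X) (p q : X → ℝ)
    (hp0 : ∀ x, 0 ≤ p x) (hq0 : ∀ x, 0 ≤ q x)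
    (habs : ∀ x, 0 < p x → 0 < q x)
    (hp : Integrable p μ) (hq : Integrable q μ)
    (hpq : ∫ x, q x ∂μ = ∫ x, p x ∂μ)
    (hint : Integrable (fun x => p x * Real.log (p x / q x)) μ) :
    0 ≤ ∫ x, p x * Real.log (p x / q x) ∂μ ∧
      ((∫ x, p x * Real.log (p x / q x) ∂μ) = 0 → p =ᵐ[μ] q) := by
  set g : X → ℝ := fun x => q x - p x + p x * Real.log (p x / q x) with hg
  have hgnn : ∀ x, 0 ≤ g x := by
    intro x
    rcases (hp0 x).lt_or_eq with hpx | hpx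
    · have hqx : 0 < q x := habs x hpx
      have ht : 0 < q x / p x := div_pos hqx hpx
      have hlog : Real.log (q x / p x) ≤ q x / p x - 1 :=
        Real.log_le_sub_one_of_pos ht
      have hinv : Real.log (p x / q x) = - Real.log (q x / p x) := by
        rw [← Real.log_inv]
        congr 1
        field_simp
      have h2 : p x * Real.log (q x / p x) ≤ q x - p x := by
        have := mul_le_mul_of_nonneg_left hlog (le_of_lt hpx)
        calc p x * Real.log (q x / p x) ≤ p x * (q x / p x - 1) := this
          _ = q x - p x := by field_simp
      simp only [hg, hinv]
      linarith
    · simp only [hg, ← hpx]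
      simpa using hq0 x
  have hgint : Integrable g μ := (hq.sub hp).add hint
  have hsub : Integrable (fun x => q x - p x) μ := hq.sub hp
  have hgval : ∫ x, g x ∂μ = ∫ x, p x * Real.log (p x / q x) ∂μ := by
    simp only [hg]
    rw [integral_add hsub hint, integral_sub hq hp, hpq]
    ring
  constructor
  · rw [← hgval]
    exact integral_nonneg hgnn
  · intro hzero
    have : ∫ x, g x ∂μ = 0 := by rw [hgval, hzero]
    have hg0 : g =ᵐ[μ] 0 :=
      (integral_eq_zero_iff_of_nonneg hgnn hgint).mp this
    filter_upwards [hg0] with x hx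
    simp only [Pi.zero_apply] at hx
    rcases (hp0 x).lt_or_eq with hpx | hpx
    · have hqx : 0 < q x := habs x hpx
      have ht : 0 < q x / p x := div_pos hqx hpx
      have hinv : Real.log (p x / q x) = - Real.log (q x / p x) := by
        rw [← Real.log_inv]
        congr 1
        field_simp
      by_contra hne
      have htne : q x / p x ≠ 1 := by
        intro h
        exact hne (by field_simp at h; linarith)
      have hlt : Real.log (q x / p x) < q x / p x - 1 :=
        Real.log_lt_sub_one_of_pos ht htne
      have h2 : p x * Real.log (q x / p x) < q x - p x := by
        have := mul_lt_mul_of_pos_left hlt hpx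
        calc p x * Real.log (q x / p x) < p x * (q x / p x - 1) := this
          _ = q x - p x := by field_simp
      simp only [hg, hinv] at hx
      linarith
    · simp only [hg, ← hpx] at hx
      simp at hx
      rw [← hpx, hx]

theorem gibbs_variational_principle
    {X : Type*} [MeasurableSpace X] (μ : Measure X) (ρ f : X → ℝ)
    (hρm : Measurable ρ) (hfm : Measurable f)
    (hρ0 : ∀ x, 0 ≤ ρ x) (hρ1 : ∫ x, ρ x ∂μ = 1)
    (η : ℝ) (hηdef : η = ∫ x, ρ x * Real.exp (-f x) ∂μ) (hηpos : 0 < η)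
    (hηfin : Integrable (fun x => ρ x * Real.exp (-f x)) μ)
    (hintstar : Integrable (fun x => (ρ x * Real.exp (-f x) / η) * f x) μ) :
    (∀ pol : X → ℝ, Measurable pol → (∀ x, 0 ≤ pol x) → (∫ x, pol x ∂μ) = 1 →
        (∀ x, 0 < pol x → 0 < ρ x) →
        Integrable (fun x => pol x * f x) μ →
        Integrable (fun x => pol x * Real.log (pol x / ρ x)) μ →
        -Real.log η ≤
          (∫ x, pol x * f x ∂μ) + ∫ x, pol x * Real.log (pol x / ρ x) ∂μ) ∧
    ((∫ x, (ρ x * Real.exp (-f x) / η) * f x ∂μ) +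
        ∫ x, (ρ x * Real.exp (-f x) / η) *
          Real.log ((ρ x * Real.exp (-f x) / η) / ρ x) ∂μ = -Real.log η) ∧
    (∀ pol : X → ℝ, Measurable pol → (∀ x, 0 ≤ pol x) → (∫ x, pol x ∂μ) = 1 →
        (∀ x, 0 < pol x → 0 < ρ x) →
        Integrable (fun x => pol x * f x) μ →
        Integrable (fun x => pol x * Real.log (pol x / ρ x)) μ →
        (∫ x, pol x * f x ∂μ) + (∫ x, pol x * Real.log (pol x / ρ x) ∂μ) = -Real.log η →
        pol =ᵐ[μ] fun x => ρ x * Real.exp (-f x) / η) := by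
  set q : X → ℝ := fun x => ρ x * Real.exp (-f x) / η with hqdef
  have hq0 : ∀ x, 0 ≤ q x := fun x =>
    div_nonneg (mul_nonneg (hρ0 x) (Real.exp_nonneg _)) hηpos.le
  have hq_int : Integrable q μ := hηfin.div_const η
  have hq1 : ∫ x, q x ∂μ = 1 := by
    simp only [hqdef]
    rw [integral_div, ← hηdef, div_self hηpos.ne']
  -- pointwise identity for pол
  have key : ∀ (p : X → ℝ), (∀ x, 0 ≤ p x) → (∀ x, 0 < p x → 0 < ρ x) →
      ∀ x, p x * Real.log (p x / q x)
        = p x * f x + p x * Real.log (p x / ρ x) + p x * Real.log η := by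
    intro p hp0 habs x
    rcases (hp0 x).lt_or_eq with hpx | hpx
    · have hρx : 0 < ρ x := habs x hpx
      have hqx : 0 < q x := div_pos (mul_pos hρx (Real.exp_pos _)) hηpos
      have h1 : Real.log (q x) = Real.log (ρ x) + (-f x) - Real.log η := by
        simp only [hqdef]
        rw [Real.log_div (mul_pos hρx (Real.exp_pos _)).ne' hηpos.ne',
          Real.log_mul hρx.ne' (Real.exp_pos _).ne', Real.log_exp]
      have h2 : Real.log (p x / q x) = Real.log (p x) - Real.log (q x) :=
        Real.log_div hpx.ne' hqx.ne'
      have h3 : Real.log (p x / ρ x) = Real.log (p x) - Real.log (ρ x) :=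
        Real.log_div hpx.ne' hρx.ne'
      rw [h2, h1, h3]
      ring
    · rw [← hpx]; ring
  -- integrability of p log(p/q) and value of its integral
  have main : ∀ (p : X → ℝ), (∀ x, 0 ≤ p x) → (∫ x, p x ∂μ) = 1 →
      (∀ x, 0 < p x → 0 < ρ x) →
      Integrable (fun x => p x * f x) μ →
      Integrable (fun x => p x * Real.log (p x / ρ x)) μ →
      Integrable (fun x => p x * Real.log (p x / q x)) μ ∧
        ∫ x, p x * Real.log (p x / q x) ∂μ
          = (∫ x, p x * f x ∂μ) + (∫ x, p x * Real.log (p x / ρ x) ∂μ)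
            + Real.log η := by
    intro p hp0 hp1 habs hintf hintD
    have hpint : Integrable p μ := by
      by_contra h
      rw [integral_undef h] at hp1
      exact one_ne_zero hp1.symm
    have heq : (fun x => p x * Real.log (p x / q x))
        = fun x => p x * f x + p x * Real.log (p x / ρ x) + p x * Real.log η := by
      funext x; exact key p hp0 habs x
    have hint3 : Integrable (fun x => p x * Real.log η) μ := hpint.mul_const _
    constructor
    · rw [heq]; exact (hintf.add hintD).add hint3
    · have h12 : Integrable (fun x => p x * f x + p x * Real.log (p x / ρ x)) μ :=
        hintf.add hintD
      rw [heq, integral_add h12 hint3, integral_add hintf hintD,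
        integral_mul_const, hp1, one_mul]
  refine ⟨?_, ?_, ?_⟩
  · intro pol hpm hp0 hp1 habs hintf hintD
    have hpint : Integrable pol μ := by
      by_contra h
      rw [integral_undef h] at hp1
      exact one_ne_zero hp1.symm
    obtain ⟨hI, hV⟩ := main pol hp0 hp1 habs hintf hintD
    have habsq : ∀ x, 0 < pol x → 0 < q x := fun x hx =>
      div_pos (mul_pos (habs x hx) (Real.exp_pos _)) hηpos
    have := (kl_core μ pol q hp0 hq0 habsq hpint hq_int (by rw [hq1, hp1]) hI).1
    rw [hV] at this
    linarith
  · -- value at the tilted density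
    have hpt : ∀ x, q x * Real.log (q x / ρ x) = -(q x * f x) - q x * Real.log η := by
      intro x
      rcases (hρ0 x).lt_or_eq with hρx | hρx
      · have h1 : q x / ρ x = Real.exp (-f x) / η := by
          simp only [hqdef]; field_simp
        rw [h1, Real.log_div (Real.exp_pos _).ne' hηpos.ne', Real.log_exp]
        ring
      · have : q x = 0 := by simp only [hqdef, ← hρx]; simp
        rw [this]; ring
    have hint2 : Integrable (fun x => q x * Real.log (q x / ρ x)) μ := by
      have : (fun x => q x * Real.log (q x / ρ x))
          = fun x => -(q x * f x) - q x * Real.log η := funext hpt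
      rw [this]
      have hqf : Integrable (fun x => q x * f x) μ := hintstar
      exact (hqf.neg).sub (hq_int.mul_const _)
    have hval : ∫ x, q x * Real.log (q x / ρ x) ∂μ
        = -(∫ x, q x * f x ∂μ) - Real.log η := by
      have hqf : Integrable (fun x => q x * f x) μ := hintstar
      have hneg : Integrable (fun x => -(q x * f x)) μ := hqf.neg
      rw [show (fun x => q x * Real.log (q x / ρ x))
          = fun x => -(q x * f x) - q x * Real.log η from funext hpt]
      rw [integral_sub hneg (hq_int.mul_const _), integral_neg,
        integral_mul_const, hq1, one_mul]
    show (∫ x, q x * f x ∂μ) + ∫ x, q x * Real.log (q x / ρ x) ∂μ = -Real.log η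
    rw [hval]; ring
  · intro pol hpm hp0 hp1 habs hintf hintD heq
    have hpint : Integrable pol μ := by
      by_contra h
      rw [integral_undef h] at hp1
      exact one_ne_zero hp1.symm
    obtain ⟨hI, hV⟩ := main pol hp0 hp1 habs hintf hintD
    have habsq : ∀ x, 0 < pol x → 0 < q x := fun x hx =>
      div_pos (mul_pos (habs x hx) (Real.exp_pos _)) hηpos
    have hzero : ∫ x, pol x * Real.log (pol x / q x) ∂μ = 0 := by
      rw [hV, heq]; ring
    exact (kl_core μ pol q hp0 hq0 habsq hpint hq_int (by rw [hq1, hp1]) hI).2 hzero
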